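/- Let n = d₁ + d₂ with d₁, d₂ ≥ 1, and let A, N₁, …, N_m ∈ ℂ^{n×n}, B ∈ ℂ^{n×m}, C ∈ ℂ^{l×n}. Suppose: (i) A is Hurwitz; (ii) the diagonal matrix Σ = diag(σ₁, …, σ_n) with all σ_i > 0 satisfies both generalized Lyapunov equations A Σ + Σ A* + Σ_{k=1}^m N_k Σ N_k* + B B* = 0 and A* Σ + Σ A + Σ_{k=1}^m N_k* Σ N_k + C* C = 0; (iii) the pair (A,B) is controllable and the pair (A,C) is observable; (iv) the sets {σ₁, …, σ_{d₁}} and {σ_{d₁+1}, …, σ_n} are disjoint. Then every eigenvalue of the lower-right d₂×d₂ block A₂₂ of A (rows and columns d₁+1, …, n) has strictly negative real part, i.e. A₂₂ is Hurwitz. -/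

import Mathlib

open Matrix Complex

namespace BalancedAux

variable {α β : Type*} [Fintype α] [Fintype β]

lemma dot_conjT' {ι κ : Type*} [Fintype ι] [Fintype κ]
    (M : Matrix ι κ ℂ) (x : ι → ℂ) (y : κ → ℂ) :
    star x ⬝ᵥ (M *ᵥ y) = star (Mᴴ *ᵥ x) ⬝ᵥ y := by
  rw [star_mulVec, conjTranspose_conjTranspose, dotProduct_mulVec]

lemma mulVec_sumElim_inr (M : Matrix (α ⊕ β) (α ⊕ β) ℂ) (v : β → ℂ) (j : β) :
    (M *ᵥ Sum.elim 0 v) (Sum.inr j) = (M.toBlocks₂₂ *ᵥ v) j := by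
  simp [mulVec, dotProduct, Fintype.sum_sum_type, toBlocks₂₂]

lemma mulVec_sumElim_inl (M : Matrix (α ⊕ β) (α ⊕ β) ℂ) (v : β → ℂ) (i : α) :
    (M *ᵥ Sum.elim 0 v) (Sum.inl i) = (M.toBlocks₁₂ *ᵥ v) i := by
  simp [mulVec, dotProduct, Fintype.sum_sum_type, toBlocks₁₂]

lemma diag_mulVec_sumElim [DecidableEq α] [DecidableEq β] (d : α ⊕ β → ℂ) (v : β → ℂ) :
    (diagonal d) *ᵥ Sum.elim (0 : α → ℂ) v = Sum.elim (0 : α → ℂ) (fun j => d (Sum.inr j) * v j) := by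
  funext i
  cases i with
  | inl i => simp [mulVec_diagonal]
  | inr j => simp [mulVec_diagonal]

lemma dot_sumElim (x : α ⊕ β → ℂ) (w : β → ℂ) :
    x ⬝ᵥ Sum.elim 0 w = ∑ j, x (Sum.inr j) * w j := by
  simp [dotProduct, Fintype.sum_sum_type]

lemma star_sumElim_dot (v : β → ℂ) (x : α ⊕ β → ℂ) :
    star (Sum.elim (0 : α → ℂ) v) ⬝ᵥ x = ∑ j, (starRingEnd ℂ) (v j) * x (Sum.inr j) := by
  simp [dotProduct, Fintype.sum_sum_type]

lemma dot_star_diag {ι : Type*} [Fintype ι] [DecidableEq ι] (d : ι → ℝ) (x : ι → ℂ) :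
    star x ⬝ᵥ ((diagonal (fun i => (d i : ℂ))) *ᵥ x) =
      ((∑ i, d i * normSq (x i) : ℝ) : ℂ) := by
  push_cast
  simp only [dotProduct, mulVec_diagonal, Pi.star_apply]
  refine Finset.sum_congr rfl fun i _ => ?_
  rw [normSq_eq_conj_mul_self, Complex.star_def]
  ring

lemma dot_star_self {ι : Type*} [Fintype ι] (x : ι → ℂ) :
    star x ⬝ᵥ x = ((∑ i, normSq (x i) : ℝ) : ℂ) := by
  push_cast
  simp only [dotProduct, Pi.star_apply]
  refine Finset.sum_congr rfl fun i _ => ?_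
  rw [normSq_eq_conj_mul_self, Complex.star_def]

lemma sum_mulVec {ι m n : Type*} [Fintype ι] [Fintype m] [Fintype n]
    (f : ι → Matrix m n ℂ) (x : n → ℂ) :
    (∑ k, f k) *ᵥ x = ∑ k, (f k) *ᵥ x := by
  funext i
  simp only [mulVec, dotProduct, Matrix.sum_apply, Finset.sum_apply, Finset.sum_mul]
  exact Finset.sum_comm

lemma dot_sum {ι κ : Type*} [Fintype ι] [Fintype κ] (x : κ → ℂ) (y : ι → κ → ℂ) :
    x ⬝ᵥ (∑ k, y k) = ∑ k, x ⬝ᵥ y k := by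
  simp only [dotProduct, Finset.sum_apply, Finset.mul_sum]
  exact Finset.sum_comm

lemma diag_sq_ne {a b : ℝ} (ha : 0 < a) (hb : 0 < b) (hne : a ≠ b) :
    ((a : ℂ))^2 ≠ ((b : ℂ))^2 := by
  intro h
  apply hne
  have : (a^2 : ℝ) = b^2 := by exact_mod_cast h
  nlinarith

end BalancedAux

open BalancedAux

/-- Stability of the lower-right block of a balanced bilinear system:
if the system `(A, N₁, …, N_m, B, C)` is balanced with Hankel singular value
matrix `Σ = diagonal σ` (all `σ i > 0`), `A` is Hurwitz, `(A, B)` is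
controllable, `(A, C)` is observable, and the two groups of singular values
are disjoint, then the block `A₂₂` is Hurwitz. -/
theorem balanced_toBlocks₂₂_hurwitz
    (d₁ d₂ m l : ℕ) (hd₁ : 1 ≤ d₁) (hd₂ : 1 ≤ d₂)
    (A : Matrix (Fin d₁ ⊕ Fin d₂) (Fin d₁ ⊕ Fin d₂) ℂ)
    (N : Fin m → Matrix (Fin d₁ ⊕ Fin d₂) (Fin d₁ ⊕ Fin d₂) ℂ)
    (B : Matrix (Fin d₁ ⊕ Fin d₂) (Fin m) ℂ)
    (C : Matrix (Fin l) (Fin d₁ ⊕ Fin d₂) ℂ)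
    (σ : Fin d₁ ⊕ Fin d₂ → ℝ) (hσ : ∀ i, 0 < σ i)
    (hHurwitz : ∀ μ ∈ spectrum ℂ A, μ.re < 0)
    (hLyapP : A * Matrix.diagonal (fun i => (σ i : ℂ)) +
        Matrix.diagonal (fun i => (σ i : ℂ)) * Aᴴ +
        (∑ k, N k * Matrix.diagonal (fun i => (σ i : ℂ)) * (N k)ᴴ) + B * Bᴴ = 0)
    (hLyapQ : Aᴴ * Matrix.diagonal (fun i => (σ i : ℂ)) +
        Matrix.diagonal (fun i => (σ i : ℂ)) * A +
        (∑ k, (N k)ᴴ * Matrix.diagonal (fun i => (σ i : ℂ)) * N k) + Cᴴ * C = 0)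
    (hctrb : (Matrix.of fun (i : Fin d₁ ⊕ Fin d₂) (p : Fin (d₁ + d₂) × Fin m) =>
        (A ^ (p.1 : ℕ) * B) i p.2).rank = d₁ + d₂)
    (hobs : (Matrix.of fun (i : Fin d₁ ⊕ Fin d₂) (p : Fin (d₁ + d₂) × Fin l) =>
        (Aᴴ ^ (p.1 : ℕ) * Cᴴ) i p.2).rank = d₁ + d₂)
    (hdisj : ∀ (i : Fin d₁) (j : Fin d₂), σ (Sum.inl i) ≠ σ (Sum.inr j)) :
    ∀ μ ∈ spectrum ℂ A.toBlocks₂₂, μ.re < 0 := by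
  intro μ hμ
  by_contra hre
  push_neg at hre
  classical
  set S : Matrix (Fin d₁ ⊕ Fin d₂) (Fin d₁ ⊕ Fin d₂) ℂ :=
    Matrix.diagonal (fun i => (σ i : ℂ)) with hS
  -- expanded (vector) forms of the Lyapunov equations
  have expandQ : ∀ x : (Fin d₁ ⊕ Fin d₂) → ℂ,
      Aᴴ *ᵥ (S *ᵥ x) + S *ᵥ (A *ᵥ x) +
        (∑ k, (N k)ᴴ *ᵥ (S *ᵥ (N k *ᵥ x))) + Cᴴ *ᵥ (C *ᵥ x) = 0 := by
    intro x
    have h := congrArg (fun M => M *ᵥ x) hLyapQ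
    simpa only [add_mulVec, BalancedAux.sum_mulVec, ← mulVec_mulVec, zero_mulVec] using h
  have expandP : ∀ x : (Fin d₁ ⊕ Fin d₂) → ℂ,
      A *ᵥ (S *ᵥ x) + S *ᵥ (Aᴴ *ᵥ x) +
        (∑ k, N k *ᵥ (S *ᵥ ((N k)ᴴ *ᵥ x))) + B *ᵥ (Bᴴ *ᵥ x) = 0 := by
    intro x
    have h := congrArg (fun M => M *ᵥ x) hLyapP
    simpa only [add_mulVec, BalancedAux.sum_mulVec, ← mulVec_mulVec, zero_mulVec] using h
  -- action of A on embedded eigenvectors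
  have hAx : ∀ (v : Fin d₂ → ℂ), A.toBlocks₂₂ *ᵥ v = μ • v →
      ∀ j, (A *ᵥ Sum.elim (0 : Fin d₁ → ℂ) v) (Sum.inr j) = μ * v j := by
    intro v hv j
    rw [mulVec_sumElim_inr, hv]
    simp
  -- the key scalar identity from the observability Lyapunov equation
  have key : ∀ v : Fin d₂ → ℂ, A.toBlocks₂₂ *ᵥ v = μ • v →
      2 * μ.re * (∑ j, σ (Sum.inr j) * normSq (v j)) +
      (∑ k, ∑ i, σ i * normSq ((N k *ᵥ Sum.elim (0 : Fin d₁ → ℂ) v) i)) +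
        (∑ q, normSq ((C *ᵥ Sum.elim (0 : Fin d₁ → ℂ) v) q)) = 0 := by
    intro v hv
    set x : (Fin d₁ ⊕ Fin d₂) → ℂ := Sum.elim (0 : Fin d₁ → ℂ) v with hx
    have h0 : star x ⬝ᵥ (Aᴴ *ᵥ (S *ᵥ x) + S *ᵥ (A *ᵥ x) +
        (∑ k, (N k)ᴴ *ᵥ (S *ᵥ (N k *ᵥ x))) + Cᴴ *ᵥ (C *ᵥ x)) = 0 := by
      rw [expandQ x]; exact dotProduct_zero _
    rw [dotProduct_add, dotProduct_add, dotProduct_add, dot_sum] at h0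
    have t1 : star x ⬝ᵥ (Aᴴ *ᵥ (S *ᵥ x)) =
        ∑ j, (starRingEnd ℂ) (μ * v j) * ((σ (Sum.inr j) : ℂ) * v j) := by
      rw [dot_conjT', conjTranspose_conjTranspose, hx, hS, diag_mulVec_sumElim, dot_sumElim]
      refine Finset.sum_congr rfl fun j _ => ?_
      rw [Pi.star_apply, ← hx, hAx v hv j, Complex.star_def]
    have t2 : star x ⬝ᵥ (S *ᵥ (A *ᵥ x)) =
        ∑ j, (starRingEnd ℂ) (v j) * ((σ (Sum.inr j) : ℂ) * (μ * v j)) := by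
      rw [hx, star_sumElim_dot]
      refine Finset.sum_congr rfl fun j _ => ?_
      rw [hS, mulVec_diagonal, ← hx, hAx v hv j]
    have t3 : ∀ k, star x ⬝ᵥ ((N k)ᴴ *ᵥ (S *ᵥ (N k *ᵥ x))) =
        ((∑ i, σ i * normSq ((N k *ᵥ x) i) : ℝ) : ℂ) := by
      intro k
      rw [dot_conjT', conjTranspose_conjTranspose, hS, dot_star_diag]
    have t4 : star x ⬝ᵥ (Cᴴ *ᵥ (C *ᵥ x)) = ((∑ q, normSq ((C *ᵥ x) q) : ℝ) : ℂ) := by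
      rw [dot_conjT', conjTranspose_conjTranspose, dot_star_self]
    rw [t1, t2, t4] at h0
    simp only [t3] at h0
    have h12 : (∑ j, (starRingEnd ℂ) (μ * v j) * ((σ (Sum.inr j) : ℂ) * v j)) +
        (∑ j, (starRingEnd ℂ) (v j) * ((σ (Sum.inr j) : ℂ) * (μ * v j))) =
        ((2 * μ.re * (∑ j, σ (Sum.inr j) * normSq (v j)) : ℝ) : ℂ) := by
      rw [← Finset.sum_add_distrib]
      push_cast [Finset.mul_sum]
      refine Finset.sum_congr rfl fun j _ => ?_
      have h2 : 2 * (μ.re : ℂ) = μ + (starRingEnd ℂ) μ := by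
        rw [Complex.add_conj]; push_cast; ring
      rw [normSq_eq_conj_mul_self, _root_.map_mul]
      linear_combination (-((σ (Sum.inr j) : ℂ) * ((starRingEnd ℂ) (v j) * v j))) * h2
    rw [h12] at h0
    exact_mod_cast h0
  -- a nonzero eigenvector of A₂₂
  have heig2 : Module.End.HasEigenvalue (Matrix.toLinAlgEquiv' A.toBlocks₂₂) μ := by
    rw [Module.End.hasEigenvalue_iff_mem_spectrum, AlgEquiv.spectrum_eq]
    exact hμ
  obtain ⟨v₁, hv₁⟩ := heig2.exists_hasEigenvector
  have hv₁eq : A.toBlocks₂₂ *ᵥ v₁ = μ • v₁ := by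
    simpa [Matrix.toLinAlgEquiv'_apply] using hv₁.apply_eq_smul
  have hv₁ne : v₁ ≠ 0 := hv₁.right
  -- the eigenvalue is purely imaginary
  have hμre : μ.re = 0 := by
    have h := key v₁ hv₁eq
    obtain ⟨j₀, hj₀⟩ : ∃ j, v₁ j ≠ 0 := by
      by_contra hall; push_neg at hall; exact hv₁ne (funext hall)
    have hc : 0 < ∑ j, σ (Sum.inr j) * normSq (v₁ j) := by
      refine Finset.sum_pos' (fun j _ => mul_nonneg (hσ _).le (normSq_nonneg _))
        ⟨j₀, Finset.mem_univ _, mul_pos (hσ _) (normSq_pos.mpr hj₀)⟩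
    have h3 : 0 ≤ ∑ k, ∑ i, σ i * normSq ((N k *ᵥ Sum.elim (0 : Fin d₁ → ℂ) v₁) i) :=
      Finset.sum_nonneg fun k _ => Finset.sum_nonneg fun i _ =>
        mul_nonneg (hσ _).le (normSq_nonneg _)
    have h4 : 0 ≤ ∑ q, normSq ((C *ᵥ Sum.elim (0 : Fin d₁ → ℂ) v₁) q) :=
      Finset.sum_nonneg fun q _ => normSq_nonneg _
    nlinarith [mul_nonneg hre hc.le]
  -- every eigenvector is killed by the N blocks and by C
  have vanish : ∀ v : Fin d₂ → ℂ, A.toBlocks₂₂ *ᵥ v = μ • v →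
      (∀ k, N k *ᵥ Sum.elim (0 : Fin d₁ → ℂ) v = 0) ∧
        C *ᵥ Sum.elim (0 : Fin d₁ → ℂ) v = 0 := by
    intro v hv
    have h := key v hv
    rw [hμre] at h
    have h3 : 0 ≤ ∑ k, ∑ i, σ i * normSq ((N k *ᵥ Sum.elim (0 : Fin d₁ → ℂ) v) i) :=
      Finset.sum_nonneg fun k _ => Finset.sum_nonneg fun i _ =>
        mul_nonneg (hσ _).le (normSq_nonneg _)
    have h4 : 0 ≤ ∑ q, normSq ((C *ᵥ Sum.elim (0 : Fin d₁ → ℂ) v) q) :=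
      Finset.sum_nonneg fun q _ => normSq_nonneg _
    have hr3 : ∑ k, ∑ i, σ i * normSq ((N k *ᵥ Sum.elim (0 : Fin d₁ → ℂ) v) i) = 0 := by
      nlinarith
    have hr4 : ∑ q, normSq ((C *ᵥ Sum.elim (0 : Fin d₁ → ℂ) v) q) = 0 := by nlinarith
    constructor
    · intro k
      have hk := (Finset.sum_eq_zero_iff_of_nonneg (fun k _ =>
        Finset.sum_nonneg fun i _ => mul_nonneg (hσ _).le (normSq_nonneg _))).mp hr3 k
        (Finset.mem_univ _)
      funext i
      have hi := (Finset.sum_eq_zero_iff_of_nonneg (fun i _ =>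
        mul_nonneg (hσ _).le (normSq_nonneg _))).mp hk i (Finset.mem_univ _)
      have : normSq ((N k *ᵥ Sum.elim (0 : Fin d₁ → ℂ) v) i) = 0 := by
        rcases mul_eq_zero.mp hi with h' | h'
        · exact absurd h' (hσ i).ne'
        · exact h'
      simpa using normSq_eq_zero.mp this
    · funext q
      have hq := (Finset.sum_eq_zero_iff_of_nonneg (fun q _ => normSq_nonneg _)).mp hr4 q
        (Finset.mem_univ _)
      simpa using normSq_eq_zero.mp hq
  -- first vector consequence of the observability equation
  have stage1 : ∀ v : Fin d₂ → ℂ, A.toBlocks₂₂ *ᵥ v = μ • v →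
      Aᴴ *ᵥ (S *ᵥ Sum.elim (0 : Fin d₁ → ℂ) v) =
        -(S *ᵥ (A *ᵥ Sum.elim (0 : Fin d₁ → ℂ) v)) := by
    intro v hv
    have h := expandQ (Sum.elim (0 : Fin d₁ → ℂ) v)
    obtain ⟨hN, hCv⟩ := vanish v hv
    simp only [hN, hCv, Matrix.mulVec_zero, Finset.sum_const_zero, add_zero] at h
    exact eq_neg_of_add_eq_zero_left h
  have hμconj : μ + (starRingEnd ℂ) μ = 0 := by
    rw [Complex.add_conj, hμre]
    simp
  -- second scalar step, from the controllability equation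
  have vanish2 : ∀ v : Fin d₂ → ℂ, A.toBlocks₂₂ *ᵥ v = μ • v →
      (∀ k, (N k)ᴴ *ᵥ (S *ᵥ Sum.elim (0 : Fin d₁ → ℂ) v) = 0) ∧
        Bᴴ *ᵥ (S *ᵥ Sum.elim (0 : Fin d₁ → ℂ) v) = 0 := by
    intro v hv
    set x : (Fin d₁ ⊕ Fin d₂) → ℂ := Sum.elim (0 : Fin d₁ → ℂ) v with hx
    set w : Fin d₂ → ℂ := fun j => (σ (Sum.inr j) : ℂ) * v j with hw
    have hy : S *ᵥ x = Sum.elim (0 : Fin d₁ → ℂ) w := by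
      rw [hx, hS]; exact diag_mulVec_sumElim _ _
    have hAy : Aᴴ *ᵥ (S *ᵥ x) = -(S *ᵥ (A *ᵥ x)) := by
      rw [hx]; exact stage1 v hv
    have hyinr : ∀ j, (Aᴴ *ᵥ (S *ᵥ x)) (Sum.inr j) =
        -((σ (Sum.inr j) : ℂ) * (μ * v j)) := by
      intro j
      rw [hAy, Pi.neg_apply, hS, mulVec_diagonal, hx, hAx v hv j]
    have h0 : star (S *ᵥ x) ⬝ᵥ (A *ᵥ (S *ᵥ (S *ᵥ x)) + S *ᵥ (Aᴴ *ᵥ (S *ᵥ x)) +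
        (∑ k, N k *ᵥ (S *ᵥ ((N k)ᴴ *ᵥ (S *ᵥ x)))) + B *ᵥ (Bᴴ *ᵥ (S *ᵥ x))) = 0 := by
      rw [expandP (S *ᵥ x)]; exact dotProduct_zero _
    rw [dotProduct_add, dotProduct_add, dotProduct_add, dot_sum] at h0
    have u1 : star (S *ᵥ x) ⬝ᵥ (A *ᵥ (S *ᵥ (S *ᵥ x))) =
        ∑ j, (starRingEnd ℂ) (-((σ (Sum.inr j) : ℂ) * (μ * v j))) *
          ((σ (Sum.inr j) : ℂ) * w j) := by
      rw [dot_conjT']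
      conv_lhs => rw [hy]
      rw [hS, diag_mulVec_sumElim, dot_sumElim]
      refine Finset.sum_congr rfl fun j _ => ?_
      rw [Pi.star_apply, ← hy, hyinr j, Complex.star_def]
    have u2 : star (S *ᵥ x) ⬝ᵥ (S *ᵥ (Aᴴ *ᵥ (S *ᵥ x))) =
        ∑ j, (starRingEnd ℂ) (w j) *
          ((σ (Sum.inr j) : ℂ) * -((σ (Sum.inr j) : ℂ) * (μ * v j))) := by
      conv_lhs => rw [hy, star_sumElim_dot]
      refine Finset.sum_congr rfl fun j _ => ?_
      rw [hS, mulVec_diagonal, ← hy, hyinr j]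
    have u3 : ∀ k, star (S *ᵥ x) ⬝ᵥ (N k *ᵥ (S *ᵥ ((N k)ᴴ *ᵥ (S *ᵥ x)))) =
        ((∑ i, σ i * normSq (((N k)ᴴ *ᵥ (S *ᵥ x)) i) : ℝ) : ℂ) := by
      intro k
      rw [dot_conjT', hS, dot_star_diag]
    have u4 : star (S *ᵥ x) ⬝ᵥ (B *ᵥ (Bᴴ *ᵥ (S *ᵥ x))) =
        ((∑ q, normSq ((Bᴴ *ᵥ (S *ᵥ x)) q) : ℝ) : ℂ) := by
      rw [dot_conjT', dot_star_self]
    rw [u1, u2, u4] at h0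
    simp only [u3] at h0
    have h12 : (∑ j, (starRingEnd ℂ) (-((σ (Sum.inr j) : ℂ) * (μ * v j))) *
          ((σ (Sum.inr j) : ℂ) * w j)) +
        (∑ j, (starRingEnd ℂ) (w j) *
          ((σ (Sum.inr j) : ℂ) * -((σ (Sum.inr j) : ℂ) * (μ * v j)))) = 0 := by
      rw [← Finset.sum_add_distrib]
      refine Finset.sum_eq_zero fun j _ => ?_
      rw [hw]
      simp only [map_neg, _root_.map_mul, Complex.conj_ofReal]
      linear_combination (-((σ (Sum.inr j) : ℂ) * (σ (Sum.inr j) : ℂ) *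
        (σ (Sum.inr j) : ℂ) * ((starRingEnd ℂ) (v j) * v j))) * hμconj
    rw [h12, zero_add] at h0
    have hreal : (∑ k, ∑ i, σ i * normSq (((N k)ᴴ *ᵥ (S *ᵥ x)) i)) +
        (∑ q, normSq ((Bᴴ *ᵥ (S *ᵥ x)) q)) = 0 := by exact_mod_cast h0
    have h3 : 0 ≤ ∑ k, ∑ i, σ i * normSq (((N k)ᴴ *ᵥ (S *ᵥ x)) i) :=
      Finset.sum_nonneg fun k _ => Finset.sum_nonneg fun i _ =>
        mul_nonneg (hσ _).le (normSq_nonneg _)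
    have h4 : 0 ≤ ∑ q, normSq ((Bᴴ *ᵥ (S *ᵥ x)) q) :=
      Finset.sum_nonneg fun q _ => normSq_nonneg _
    have hr3 : ∑ k, ∑ i, σ i * normSq (((N k)ᴴ *ᵥ (S *ᵥ x)) i) = 0 := by nlinarith
    have hr4 : ∑ q, normSq ((Bᴴ *ᵥ (S *ᵥ x)) q) = 0 := by nlinarith
    constructor
    · intro k
      have hk := (Finset.sum_eq_zero_iff_of_nonneg (fun k _ =>
        Finset.sum_nonneg fun i _ => mul_nonneg (hσ _).le (normSq_nonneg _))).mp hr3 k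
        (Finset.mem_univ _)
      funext i
      have hi := (Finset.sum_eq_zero_iff_of_nonneg (fun i _ =>
        mul_nonneg (hσ _).le (normSq_nonneg _))).mp hk i (Finset.mem_univ _)
      have : normSq (((N k)ᴴ *ᵥ (S *ᵥ x)) i) = 0 := by
        rcases mul_eq_zero.mp hi with h' | h'
        · exact absurd h' (hσ i).ne'
        · exact h'
      simpa using normSq_eq_zero.mp this
    · funext q
      have hq := (Finset.sum_eq_zero_iff_of_nonneg (fun q _ => normSq_nonneg _)).mp hr4 q
        (Finset.mem_univ _)
      simpa using normSq_eq_zero.mp hq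
  -- second vector step
  have stage2 : ∀ v : Fin d₂ → ℂ, A.toBlocks₂₂ *ᵥ v = μ • v →
      A *ᵥ (S *ᵥ (S *ᵥ Sum.elim (0 : Fin d₁ → ℂ) v)) =
        S *ᵥ (S *ᵥ (A *ᵥ Sum.elim (0 : Fin d₁ → ℂ) v)) := by
    intro v hv
    have h := expandP (S *ᵥ Sum.elim (0 : Fin d₁ → ℂ) v)
    obtain ⟨hN2, hB2⟩ := vanish2 v hv
    simp only [hN2, hB2, Matrix.mulVec_zero, Finset.sum_const_zero, add_zero] at h
    rw [stage1 v hv, Matrix.mulVec_neg] at h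
    exact add_neg_eq_zero.mp h
  -- the squared Σ₂ block and the eigenspace
  set D2 : Matrix (Fin d₂) (Fin d₂) ℂ :=
    Matrix.diagonal (fun j => ((σ (Sum.inr j) : ℂ))^2) with hD2def
  have hSS : ∀ v : Fin d₂ → ℂ,
      S *ᵥ (S *ᵥ Sum.elim (0 : Fin d₁ → ℂ) v) = Sum.elim (0 : Fin d₁ → ℂ) (D2 *ᵥ v) := by
    intro v
    rw [hS, diag_mulVec_sumElim, diag_mulVec_sumElim]
    funext i
    cases i with
    | inl i => simp
    | inr j =>
      simp only [Sum.elim_inr, hD2def, mulVec_diagonal]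
      ring
  have inv22 : ∀ v : Fin d₂ → ℂ, A.toBlocks₂₂ *ᵥ v = μ • v →
      A.toBlocks₂₂ *ᵥ (D2 *ᵥ v) = μ • (D2 *ᵥ v) := by
    intro v hv
    have h := stage2 v hv
    rw [hSS] at h
    funext j
    have hj := congrFun h (Sum.inr j)
    rw [mulVec_sumElim_inr] at hj
    rw [hj, hS, mulVec_diagonal, mulVec_diagonal, hAx v hv j]
    rw [hD2def]
    simp only [Pi.smul_apply, smul_eq_mul, mulVec_diagonal]
    ring
  have inv12 : ∀ v : Fin d₂ → ℂ, A.toBlocks₂₂ *ᵥ v = μ • v →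
      ∀ i, (A.toBlocks₁₂ *ᵥ (D2 *ᵥ v)) i =
        ((σ (Sum.inl i) : ℂ))^2 * (A.toBlocks₁₂ *ᵥ v) i := by
    intro v hv i
    have h := stage2 v hv
    rw [hSS] at h
    have hi := congrFun h (Sum.inl i)
    rw [mulVec_sumElim_inl] at hi
    rw [hi, hS, mulVec_diagonal, mulVec_diagonal, mulVec_sumElim_inl]
    ring
  -- find an eigenvector of D2 inside the eigenspace
  have hmemE : ∀ v : Fin d₂ → ℂ,
      v ∈ Module.End.eigenspace (Matrix.toLinAlgEquiv' A.toBlocks₂₂) μ ↔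
        A.toBlocks₂₂ *ᵥ v = μ • v := by
    intro v
    rw [Module.End.mem_eigenspace_iff]
    simp [Matrix.toLinAlgEquiv'_apply]
  have hinvE : ∀ v ∈ Module.End.eigenspace (Matrix.toLinAlgEquiv' A.toBlocks₂₂) μ,
      (Matrix.toLinAlgEquiv' D2) v ∈
        Module.End.eigenspace (Matrix.toLinAlgEquiv' A.toBlocks₂₂) μ := by
    intro v hv
    rw [hmemE] at hv ⊢
    simpa [Matrix.toLinAlgEquiv'_apply] using inv22 v hv
  set E := Module.End.eigenspace (Matrix.toLinAlgEquiv' A.toBlocks₂₂) μ with hE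
  haveI : Nontrivial E :=
    nontrivial_of_ne ⟨v₁, (hmemE v₁).mpr hv₁eq⟩ 0
      (by simp [Submodule.mk_eq_zero, hv₁ne])
  set T : Module.End ℂ E :=
    LinearMap.restrict ((Matrix.toLinAlgEquiv' D2 : (Fin d₂ → ℂ) →ₗ[ℂ] (Fin d₂ → ℂ))) hinvE
    with hT
  obtain ⟨s, hs⟩ := Module.End.exists_eigenvalue T
  obtain ⟨v₀', hv₀'⟩ := hs.exists_hasEigenvector
  have hv₀E : A.toBlocks₂₂ *ᵥ (v₀' : Fin d₂ → ℂ) = μ • (v₀' : Fin d₂ → ℂ) :=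
    (hmemE _).mp v₀'.2
  have hv₀ne : (v₀' : Fin d₂ → ℂ) ≠ 0 := by
    intro h
    exact hv₀'.right (by exact_mod_cast Subtype.ext h)
  have hDv₀ : D2 *ᵥ (v₀' : Fin d₂ → ℂ) = s • (v₀' : Fin d₂ → ℂ) := by
    have h := hv₀'.apply_eq_smul
    have h2 := congrArg (Subtype.val : E → (Fin d₂ → ℂ)) h
    simpa [hT, LinearMap.restrict_apply, Matrix.toLinAlgEquiv'_apply] using h2
  obtain ⟨j₀, hj₀⟩ : ∃ j, (v₀' : Fin d₂ → ℂ) j ≠ 0 := by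
    by_contra hall; push_neg at hall; exact hv₀ne (funext hall)
  have hs_eq : s = ((σ (Sum.inr j₀) : ℂ))^2 := by
    have h := congrFun hDv₀ j₀
    rw [hD2def, mulVec_diagonal] at h
    simp only [Pi.smul_apply, smul_eq_mul] at h
    exact (mul_right_cancel₀ hj₀ h).symm
  -- the 12-block kills v₀
  have hA12v₀ : A.toBlocks₁₂ *ᵥ (v₀' : Fin d₂ → ℂ) = 0 := by
    funext i
    have h := inv12 _ hv₀E i
    rw [hDv₀, Matrix.mulVec_smul] at h
    simp only [Pi.smul_apply, smul_eq_mul] at h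
    have hne : ((σ (Sum.inl i) : ℂ))^2 ≠ s := by
      rw [hs_eq]
      exact diag_sq_ne (hσ _) (hσ _) (hdisj i j₀)
    have hz : (s - ((σ (Sum.inl i) : ℂ))^2) * ((A.toBlocks₁₂ *ᵥ (v₀' : Fin d₂ → ℂ)) i) = 0 := by
      rw [sub_mul]
      linear_combination h
    rcases mul_eq_zero.mp hz with h' | h'
    · exact absurd (by linear_combination -h' : ((σ (Sum.inl i) : ℂ))^2 = s) hne
    · simpa using h'
  -- build an eigenvector of A with eigenvalue μ
  have hx₀ : A *ᵥ Sum.elim (0 : Fin d₁ → ℂ) (v₀' : Fin d₂ → ℂ) =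
      μ • Sum.elim (0 : Fin d₁ → ℂ) (v₀' : Fin d₂ → ℂ) := by
    funext i
    cases i with
    | inl i =>
      rw [mulVec_sumElim_inl]
      rw [hA12v₀]
      simp
    | inr j =>
      rw [mulVec_sumElim_inr, hv₀E]
      simp
  have hx₀ne : Sum.elim (0 : Fin d₁ → ℂ) (v₀' : Fin d₂ → ℂ) ≠ 0 := by
    intro h
    exact hj₀ (by simpa using congrFun h (Sum.inr j₀))
  have hμA : μ ∈ spectrum ℂ A := by
    rw [← AlgEquiv.spectrum_eq (Matrix.toLinAlgEquiv'
      (n := Fin d₁ ⊕ Fin d₂) (R := ℂ)) A]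
    rw [← Module.End.hasEigenvalue_iff_mem_spectrum]
    refine Module.End.hasEigenvalue_of_hasEigenvector
      ⟨Module.End.mem_eigenspace_iff.mpr ?_, hx₀ne⟩
    simpa [Matrix.toLinAlgEquiv'_apply] using hx₀
  have := hHurwitz μ hμA
  linarith
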